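/- Let n, m ≥ 1, let E be a commutative ring, and let ρ : B_n → GL_m(E) be any group homomorphism from the braid group to the units of the matrix ring Matrix (Fin m) (Fin m) E. Set S_i := ρ(σ_i) and T_i := ρ(σ_i) − ρ(σ_i)⁻¹ (as matrices). Then: S_iS_j = S_jS_i, S_iT_j = T_jS_i, and T_iT_j = T_jT_i whenever |i−j| ≥ 2; S_iT_i = T_iS_i for every i; and S_iS_jT_i = T_jS_iS_j whenever |i−j| = 1. In other words, every finite-dimensional matrix representation of B_n extends to a representation of the singular braid monoid SB_n by sending τ_i to ρ(σ_i) − ρ(σ_i)⁻¹. -/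

import Mathlib

/-- Relators for the braid group: far commutation and the braid relations. -/
def braidRels (m : ℕ) : Set (FreeGroup (Fin m)) :=
  {r | ∃ i j : Fin m, ((i : ℕ) + 2 ≤ (j : ℕ) ∨ (j : ℕ) + 2 ≤ (i : ℕ)) ∧
        r = FreeGroup.of i * FreeGroup.of j * (FreeGroup.of j * FreeGroup.of i)⁻¹} ∪
  {r | ∃ i j : Fin m, ((j : ℕ) = (i : ℕ) + 1 ∨ (i : ℕ) = (j : ℕ) + 1) ∧
        r = FreeGroup.of i * FreeGroup.of j * FreeGroup.of i *
            (FreeGroup.of j * FreeGroup.of i * FreeGroup.of j)⁻¹}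

/-- The braid group `B_n`, presented on generators `σ_1, …, σ_{n-1}`. -/
def BraidGroup (n : ℕ) : Type := PresentedGroup (braidRels (n - 1))

instance (n : ℕ) : Group (BraidGroup n) :=
  inferInstanceAs (Group (PresentedGroup (braidRels (n - 1))))

/-- The generator `σ_{i+1}` of the braid group `B_n`. -/
def braidGen {n : ℕ} (i : Fin (n - 1)) : BraidGroup n := PresentedGroup.of i

lemma presented_rel {α : Type*} {rels : Set (FreeGroup α)} {r : FreeGroup α}
    (h : r ∈ rels) : (QuotientGroup.mk r : PresentedGroup rels) = 1 :=
  (QuotientGroup.eq_one_iff r).mpr (Subgroup.subset_normalClosure h)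

lemma braid_far {n : ℕ} (i j : Fin (n - 1))
    (h : (i : ℕ) + 2 ≤ (j : ℕ) ∨ (j : ℕ) + 2 ≤ (i : ℕ)) :
    braidGen i * braidGen j = braidGen j * braidGen i := by
  have := presented_rel (rels := braidRels (n - 1)) (Or.inl ⟨i, j, h, rfl⟩)
  have h2 : (braidGen (n := n) i * braidGen j) * (braidGen j * braidGen i)⁻¹ = 1 := by
    exact this
  exact mul_inv_eq_one.mp h2

lemma braid_adj {n : ℕ} (i j : Fin (n - 1))
    (h : (j : ℕ) = (i : ℕ) + 1 ∨ (i : ℕ) = (j : ℕ) + 1) :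
    braidGen i * braidGen j * braidGen i = braidGen j * braidGen i * braidGen j := by
  have := presented_rel (rels := braidRels (n - 1)) (Or.inr ⟨i, j, h, rfl⟩)
  have h2 : (braidGen (n := n) i * braidGen j * braidGen i) *
      (braidGen j * braidGen i * braidGen j)⁻¹ = 1 := by
    exact this
  exact mul_inv_eq_one.mp h2

/-- Every finite-dimensional matrix representation of the braid group extends
to the singular braid monoid by `τ_i ↦ ρ(σ_i) − ρ(σ_i)⁻¹`: the matrices
`S i := ρ(σ_i)` and `T i := ρ(σ_i) − ρ(σ_i)⁻¹` satisfy the defining relations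
of the singular braid monoid. -/
theorem matrix_rep_extends_to_singular_braid_monoid {E : Type*} [CommRing E]
    (n m : ℕ) (hn : 1 ≤ n) (hm : 1 ≤ m)
    (ρ : BraidGroup n →* (Matrix (Fin m) (Fin m) E)ˣ) :
    let S : Fin (n - 1) → Matrix (Fin m) (Fin m) E :=
      fun i => (ρ (braidGen i) : Matrix (Fin m) (Fin m) E)
    let T : Fin (n - 1) → Matrix (Fin m) (Fin m) E :=
      fun i => (ρ (braidGen i) : Matrix (Fin m) (Fin m) E) -
               (((ρ (braidGen i))⁻¹ : (Matrix (Fin m) (Fin m) E)ˣ) : Matrix (Fin m) (Fin m) E)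
    (∀ i j : Fin (n - 1), ((i : ℕ) + 2 ≤ (j : ℕ) ∨ (j : ℕ) + 2 ≤ (i : ℕ)) →
        S i * S j = S j * S i ∧ S i * T j = T j * S i ∧ T i * T j = T j * T i) ∧
    (∀ i : Fin (n - 1), S i * T i = T i * S i) ∧
    (∀ i j : Fin (n - 1), ((j : ℕ) = (i : ℕ) + 1 ∨ (i : ℕ) = (j : ℕ) + 1) →
        S i * S j * T i = T j * S i * S j) := by
  intro S T
  set R := fun i : Fin (n-1) => ρ (braidGen i) with hR
  have hS : ∀ i, S i = (R i : Matrix (Fin m) (Fin m) E) := fun i => rfl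
  have hT : ∀ i, T i = (R i : Matrix (Fin m) (Fin m) E) - ((R i)⁻¹ : _ˣ) := fun i => rfl
  have mc : ∀ {u v : (Matrix (Fin m) (Fin m) E)ˣ}, Commute u v →
      (u : Matrix (Fin m) (Fin m) E) * v = (v : Matrix (Fin m) (Fin m) E) * u := by
    intro u v huv
    simpa using congrArg (Units.val) huv.eq
  refine ⟨fun i j h => ?_, fun i => ?_, fun i j h => ?_⟩
  · have hc' : Commute (R i) (R j) := by
      show R i * R j = R j * R i
      rw [hR]; simp only [← map_mul, braid_far i j h]
    have h1 : Commute (R i) ((R j)⁻¹) := hc'.inv_right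
    have h2 : Commute ((R i)⁻¹) (R j) := hc'.inv_left
    have h3 : Commute ((R i)⁻¹) ((R j)⁻¹) := h2.inv_right
    have ca := mc hc'
    have cb := mc h1
    have cc := mc h2
    have cd := mc h3
    refine ⟨?_, ?_, ?_⟩
    · rw [hS, hS]; exact ca
    · rw [hS, hT]; exact (Commute.sub_right ca cb)
    · rw [hT, hT]; exact Commute.sub_left (Commute.sub_right ca cb) (Commute.sub_right cc cd)
  · rw [hS, hT, mul_sub, sub_mul]
    congr 1
    have : (R i) * (R i)⁻¹ = (R i)⁻¹ * (R i) := by simp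
    simpa using congrArg Units.val this
  · have hb : R i * R j * R i = R j * R i * R j := by
      rw [hR]; simp only [← map_mul, braid_adj i j h]
    have hb2 : R i * R j * (R i)⁻¹ = (R j)⁻¹ * (R i * R j) := by
      rw [eq_inv_mul_iff_mul_eq, ← mul_assoc, ← mul_assoc, ← hb]
      group
    rw [hS, hS, hT, hT, mul_sub, sub_mul, sub_mul]
    congr 1
    · simpa using congrArg Units.val hb
    · simpa [mul_assoc] using congrArg Units.val hb2
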